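/- Let G be a parity game, and suppose a lifting sequence is applied in which a vertex v with P(v) = k is the first vertex whose measure value becomes ⊤ (so ρ_N = Lift(ρ_{N−1}, v)). If v ∈ V_Odd, then there exists a successor w ∈ post(v) whose measure ρ_{N−1}(w) is a tuple (not ⊤) saturated up to position k, i.e., (ρ_{N−1}(w))ᵢ = nᵢ for every odd i ≤ k (and, as always, 0 at even positions ≤ k). If v ∈ V_Even, then every successor w ∈ post(v) satisfies this. -/

import Mathlib

open Classical

noncomputable section

instance (priority := 5000) (n : ℕ) : WellFoundedLT (Fin n) :=
  Finite.to_wellFoundedLT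

noncomputable instance (priority := 5000) (n : ℕ) : LinearOrder (Lex (Fin n → ℕ)) :=
  inferInstance

/-- Least element of a set, if it exists; otherwise a default value. -/
def sLeast {α : Type*} [Preorder α] (s : Set α) (dflt : α) : α :=
  if h : ∃ a, IsLeast s a then h.choose else dflt

/-- Greatest element of a set, if it exists; otherwise a default value. -/
def sGreatest {α : Type*} [Preorder α] (s : Set α) (dflt : α) : α :=
  if h : ∃ a, IsGreatest s a then h.choose else dflt

/-- A parity game: a finite set of vertices with a total edge relation, a priority
function and an ownership function (`ownerEven v = true` iff `v ∈ V_Even`). -/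
structure ParityGame (V : Type*) [Fintype V] where
  E : V → V → Prop
  total : ∀ v, ∃ w, E v w
  prio : V → ℕ
  ownerEven : V → Bool

namespace ParityGame

variable {V : Type*} [Fintype V] [DecidableEq V] (G : ParityGame V)

/-- `d` is one plus the maximal priority occurring in the game. -/
def d : ℕ := (Finset.univ.sup G.prio) + 1

/-- The domain of (extended) measures: `⊤` together with `d`-tuples of naturals,
ordered lexicographically with `⊤` maximal.  This is `M_Even_ext` (together with
tuples that are nonzero at even positions, which are never used). -/
abbrev Meas : Type _ := WithTop (Lex (Fin G.d → ℕ))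

/-- `nP i` is the number of vertices of priority `i`. -/
def nP (i : ℕ) : ℕ := (Finset.univ.filter (fun v => G.prio v = i)).card

/-- Membership in `M_Even`: `⊤`, or a `d`-tuple which is `0` at even positions and
bounded by `nP i` at odd positions `i`. -/
def inMEven (m : G.Meas) : Prop :=
  m = ⊤ ∨ ∃ f : Fin G.d → ℕ, m = ((toLex f : Lex (Fin G.d → ℕ)) : G.Meas) ∧
    ∀ i : Fin G.d, (Even (i : ℕ) → f i = 0) ∧ (¬ Even (i : ℕ) → f i ≤ G.nP (i : ℕ))

/-- Membership in `M_Even_ext`: `⊤`, or a `d`-tuple which is `0` at even positions. -/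
def inMEvenExt (m : G.Meas) : Prop :=
  m = ⊤ ∨ ∃ f : Fin G.d → ℕ, m = ((toLex f : Lex (Fin G.d → ℕ)) : G.Meas) ∧
    ∀ i : Fin G.d, Even (i : ℕ) → f i = 0

/-- Truncation of a measure to components `0, …, k` (other components set to `0`);
`⊤` is mapped to `⊤`. -/
def trunc (k : ℕ) (m : G.Meas) : G.Meas :=
  WithTop.map (fun f : Lex (Fin G.d → ℕ) => toLex (fun j : Fin G.d => if (j : ℕ) ≤ k then ofLex f j else 0)) m

/-- `a ≥_k b` : comparison of measures on components `0, …, k` only. -/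
def geAt (k : ℕ) (a b : G.Meas) : Prop := G.trunc k b ≤ G.trunc k a

/-- `a >_k b` : strict comparison of measures on components `0, …, k` only. -/
def gtAt (k : ℕ) (a b : G.Meas) : Prop := G.trunc k b < G.trunc k a

/-- The defining condition of `Prog(ρ,v,w)`. -/
def progCond (ρ : V → G.Meas) (v w : V) (m : G.Meas) : Prop :=
  if Even (G.prio v) then G.geAt (G.prio v) m (ρ w)
  else (G.gtAt (G.prio v) m (ρ w) ∨ (m = ⊤ ∧ ρ w = ⊤))

/-- `Prog(ρ,v,w)`: the least element of `M_Even` satisfying `progCond`. -/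
def Prog (ρ : V → G.Meas) (v w : V) : G.Meas :=
  if h : ∃ m, IsLeast {m | G.inMEven m ∧ G.progCond ρ v w m} m then h.choose else ⊤

/-- `ρ` takes values in `M_Even`. -/
def IsMeasure (ρ : V → G.Meas) : Prop := ∀ v, G.inMEven (ρ v)

/-- Game parity progress measure. -/
def IsGPM (ρ : V → G.Meas) : Prop :=
  G.IsMeasure ρ ∧ ∀ v,
    (G.ownerEven v = true → ∃ w, G.E v w ∧ G.geAt (G.prio v) (ρ v) (G.Prog ρ v w)) ∧
    (G.ownerEven v = false → ∀ w, G.E v w → G.geAt (G.prio v) (ρ v) (G.Prog ρ v w))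

/-- A play: an infinite `E`-path. -/
def IsPlay (π : ℕ → V) : Prop := ∀ n, G.E (π n) (π (n + 1))

/-- Priority `p` occurs infinitely often on `π`. -/
def InfOft (π : ℕ → V) (p : ℕ) : Prop := ∀ N, ∃ n, N ≤ n ∧ G.prio (π n) = p

/-- A play is won by Even iff the least priority occurring infinitely often is even. -/
def WonByEven (π : ℕ → V) : Prop := Even (sInf {p | G.InfOft π p})

/-- Won by player `i` (`true` = Even, `false` = Odd). -/
def WonBy (i : Bool) (π : ℕ → V) : Prop :=
  if i then G.WonByEven π else ¬ G.WonByEven π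

/-- The history of a play before time `n`. -/
def hist (π : ℕ → V) (n : ℕ) : List V := List.ofFn (fun k : Fin n => π (k : ℕ))

/-- A (history-dependent) strategy for player `i` is valid if it always moves along edges
from vertices of player `i`. -/
def ValidStrat (i : Bool) (σ : List V → V → V) : Prop :=
  ∀ h v, G.ownerEven v = i → G.E v (σ h v)

/-- Consistency of a play with a history-dependent strategy of player `i`. -/
def ConsH (i : Bool) (σ : List V → V → V) (π : ℕ → V) : Prop :=
  ∀ n, G.ownerEven (π n) = i → π (n + 1) = σ (hist π n) (π n)

/-- Consistency of a play with a positional strategy of player `i`. -/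
def ConsP (i : Bool) (σ : V → V) (π : ℕ → V) : Prop :=
  ∀ n, G.ownerEven (π n) = i → π (n + 1) = σ (π n)

/-- Winning region of player `i`: vertices from which `i` has a winning strategy. -/
def WinRegion (i : Bool) : Set V :=
  {v | ∃ σ : List V → V → V, G.ValidStrat i σ ∧
    ∀ π, G.IsPlay π → π 0 = v → G.ConsH i σ π → G.WonBy i π}

/-- The `i`-attractor into `U`. -/
def Attr (i : Bool) (U : Set V) : Set V :=
  ⋂₀ {A | U ⊆ A ∧
    (∀ v, G.ownerEven v = i → (∃ w, G.E v w ∧ w ∈ A) → v ∈ A) ∧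
    (∀ v, G.ownerEven v ≠ i → (∀ w, G.E v w → w ∈ A) → v ∈ A)}

/-- The guarded attractor `Attr^{≥k}_{Odd,W}(U)`. -/
def GAttr (k : ℕ) (W U : Set V) : Set V :=
  ⋂₀ {A | U ⊆ A ∧ A ⊆ W ∩ {v | k ≤ G.prio v} ∧
    ∀ u ∈ W ∩ {v | k ≤ G.prio v},
      (G.ownerEven u = false → (∃ w, G.E u w ∧ w ∈ A) → u ∈ A) ∧
      (G.ownerEven u = true → (∀ w, G.E u w → w ∈ W → w ∈ A) → u ∈ A)}

/-- The lifting operator `Lift(ρ, v)`. -/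
def Lift (ρ : V → G.Meas) (v : V) : V → G.Meas :=
  Function.update ρ v
    (if G.ownerEven v = true
      then max (ρ v) (sLeast {m | ∃ w, G.E v w ∧ m = G.Prog ρ v w} ⊤)
      else max (ρ v) (sGreatest {m | ∃ w, G.E v w ∧ m = G.Prog ρ v w} ⊤))

/-- The all-zero measure. -/
def zeroMeas : G.Meas := ((toLex (fun _ : Fin G.d => 0) : Lex (Fin G.d → ℕ)) : G.Meas)

/-- A lifting sequence `ρ₀, …, ρ_N` in which `v` is the first vertex lifted to `⊤`. -/
def FirstTop (ρs : ℕ → V → G.Meas) (N : ℕ) (v : V) : Prop :=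
  (∀ u, ρs 0 u = G.zeroMeas) ∧
  (∀ j < N, ∃ u, ρs (j + 1) = G.Lift (ρs j) u ∧
    (∀ w, ρs j w ≤ ρs (j + 1) w) ∧ ρs j ≠ ρs (j + 1)) ∧
  (∀ j < N, ∀ w, ρs j w ≠ ⊤) ∧
  ρs N v = ⊤

/-- The prefix `π 0 … π l` of a play is an `i`-dominated stretch. -/
def domStretchPrefix (π : ℕ → V) (i l : ℕ) : Prop :=
  (∀ m ≤ l, i ≤ G.prio (π m)) ∧ (∃ m ≤ l, G.prio (π m) = i)

/-- The degree of the prefix `π 0 … π l` with respect to priority `i`: the number of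
its vertices of priority `i`. -/
def degree (π : ℕ → V) (i l : ℕ) : ℕ :=
  ((Finset.range (l + 1)).filter (fun m => G.prio (π m) = i)).card

/-- The value `θ(π)` of a play: `⊤` if `π` is won by Odd, and otherwise the tuple whose
component at each odd position `i` is the degree of the maximal `i`-dominated stretch
that is a prefix of `π` (and `0` if there is no such prefix). -/
def theta (π : ℕ → V) : G.Meas :=
  if G.WonByEven π then
    ((toLex (fun j : Fin G.d =>
      if Even (j : ℕ) then 0
      else sSup {c | ∃ l, G.domStretchPrefix π (j : ℕ) l ∧ c = G.degree π (j : ℕ) l}) :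
        Lex (Fin G.d → ℕ)) : G.Meas)
  else ⊤

/-- `U` is an `i`-dominion inside the subgame induced on `W`. -/
def IsDominionIn (W : Set V) (i : Bool) (U : Set V) : Prop :=
  ∃ σ : List V → V → V,
    (∀ h u, u ∈ W → G.ownerEven u = i → G.E u (σ h u) ∧ σ h u ∈ W) ∧
    ∀ π, G.IsPlay π → (∀ n, π n ∈ W) → π 0 ∈ U → G.ConsH i σ π →
      (∀ n, π n ∈ U) ∧ G.WonBy i π

/-- `U` is an `i`-dominion in `G`. -/
def IsDominion (i : Bool) (U : Set V) : Prop := G.IsDominionIn Set.univ i U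

/-- Winning region of player `i` in the subgame induced on `W`. -/
def WinIn (W : Set V) (i : Bool) : Set V :=
  {v | v ∈ W ∧ ∃ σ : List V → V → V,
    (∀ h u, u ∈ W → G.ownerEven u = i → G.E u (σ h u) ∧ σ h u ∈ W) ∧
    ∀ π, G.IsPlay π → (∀ n, π n ∈ W) → π 0 = v → G.ConsH i σ π → G.WonBy i π}

end ParityGame

section Aux

theorem myExistsIsLeast {α : Type*} [LinearOrder α] [WellFoundedLT α] {s : Set α}
    (hs : s.Nonempty) : ∃ a, IsLeast s a := by
  obtain ⟨a, has, hmin⟩ := (IsWellFounded.wf (r := ((· < ·) : α → α → Prop))).has_min s hs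
  exact ⟨a, has, fun b hb => not_lt.1 fun h => hmin b hb h⟩

theorem myExistsIsGreatest {α : Type*} [LinearOrder α] {s : Set α}
    (hf : s.Finite) (hs : s.Nonempty) : ∃ a, IsGreatest s a := by
  obtain ⟨a, has, hmax⟩ := Set.Finite.exists_maximalFor id s hf hs
  refine ⟨a, has, fun b hb => ?_⟩
  by_contra h
  exact h (hmax hb (le_of_not_ge h))

theorem sLeast_spec {α : Type*} [PartialOrder α] {s : Set α} {dflt : α}
    (h : ∃ a, IsLeast s a) : IsLeast s (sLeast s dflt) := by
  rw [sLeast, dif_pos h]; exact h.choose_spec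

theorem sGreatest_spec {α : Type*} [PartialOrder α] {s : Set α} {dflt : α}
    (h : ∃ a, IsGreatest s a) : IsGreatest s (sGreatest s dflt) := by
  rw [sGreatest, dif_pos h]; exact h.choose_spec

namespace ParityGame

variable {V : Type*} [Fintype V] [DecidableEq V] (G : ParityGame V)

theorem trunc_coe (k : ℕ) (f : Fin G.d → ℕ) :
    G.trunc k ((toLex f : Lex (Fin G.d → ℕ)) : G.Meas) =
      ((toLex (fun j : Fin G.d => if (j : ℕ) ≤ k then f j else 0) : Lex (Fin G.d → ℕ)) : G.Meas) :=
  rfl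

theorem trunc_top (k : ℕ) : G.trunc k (⊤ : G.Meas) = ⊤ := rfl

theorem top_mem_progSet (ρ : V → G.Meas) (v w : V) :
    (⊤ : G.Meas) ∈ {m | G.inMEven m ∧ G.progCond ρ v w m} := by
  refine ⟨Or.inl rfl, ?_⟩
  rw [progCond]
  split
  · rw [geAt, trunc_top]; exact le_top
  · rcases eq_or_ne (ρ w) ⊤ with h | h
    · exact Or.inr ⟨rfl, h⟩
    · left
      rw [gtAt, trunc_top]
      obtain ⟨g, hg⟩ := WithTop.ne_top_iff_exists.1 h
      rw [← hg, trunc, WithTop.map_coe]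
      exact WithTop.coe_lt_top _

theorem prog_isLeast (ρ : V → G.Meas) (v w : V) :
    IsLeast {m | G.inMEven m ∧ G.progCond ρ v w m} (G.Prog ρ v w) := by
  have h : ∃ m, IsLeast {m | G.inMEven m ∧ G.progCond ρ v w m} m :=
    myExistsIsLeast ⟨⊤, G.top_mem_progSet ρ v w⟩
  rw [Prog, dif_pos h]; exact h.choose_spec

theorem inMEven_prog (ρ : V → G.Meas) (v w : V) : G.inMEven (G.Prog ρ v w) :=
  (G.prog_isLeast ρ v w).1.1

theorem inMEven_lift (ρ : V → G.Meas) (h : G.IsMeasure ρ) (u : V) :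
    G.IsMeasure (G.Lift ρ u) := by
  intro x
  rcases eq_or_ne x u with rfl | hx
  swap
  · rw [Lift, Function.update_of_ne hx]; exact h x
  rw [Lift, Function.update_self]
  have hS : ∀ m ∈ {m | ∃ w, G.E x w ∧ m = G.Prog ρ x w}, G.inMEven m := by
    rintro m ⟨w, _, rfl⟩; exact G.inMEven_prog ρ x w
  have hL : G.inMEven (sLeast {m | ∃ w, G.E x w ∧ m = G.Prog ρ x w} (⊤ : G.Meas)) := by
    rw [sLeast]; split
    · exact hS _ (by exact (‹∃ a, IsLeast _ a›).choose_spec.1)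
    · exact Or.inl rfl
  have hG' : G.inMEven (sGreatest {m | ∃ w, G.E x w ∧ m = G.Prog ρ x w} (⊤ : G.Meas)) := by
    rw [sGreatest]; split
    · exact hS _ (by exact (‹∃ a, IsGreatest _ a›).choose_spec.1)
    · exact Or.inl rfl
  split
  · rcases max_choice (ρ x) (sLeast {m | ∃ w, G.E x w ∧ m = G.Prog ρ x w} (⊤ : G.Meas)) with
      h' | h' <;> rw [h']
    exacts [h x, hL]
  · rcases max_choice (ρ x) (sGreatest {m | ∃ w, G.E x w ∧ m = G.Prog ρ x w} (⊤ : G.Meas)) with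
      h' | h' <;> rw [h']
    exacts [h x, hG']

theorem saturated_of_prog_top (ρ : V → G.Meas) (v w : V)
    (hm : G.inMEven (ρ w)) (f : Fin G.d → ℕ)
    (hf : ρ w = ((toLex f : Lex (Fin G.d → ℕ)) : G.Meas))
    (hp : G.Prog ρ v w = ⊤) :
    ∀ i : Fin G.d, (i : ℕ) ≤ G.prio v →
      (¬ Even (i : ℕ) → f i = G.nP (i : ℕ)) ∧ (Even (i : ℕ) → f i = 0) := by
  have hfprop : ∀ i : Fin G.d, (Even (i : ℕ) → f i = 0) ∧
      (¬ Even (i : ℕ) → f i ≤ G.nP (i : ℕ)) := by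
    rcases hm with h | ⟨g, hg, hgp⟩
    · rw [hf] at h; exact absurd h (WithTop.coe_ne_top)
    · rw [hf] at hg
      have : g = f := (toLex_inj.1 (WithTop.coe_inj.1 hg)).symm
      subst this; exact hgp
  set k := G.prio v with hk
  have hnotlt : ∀ m ∈ {m | G.inMEven m ∧ G.progCond ρ v w m}, m ≠ (⊤ : G.Meas) → False := by
    intro m hmem hne
    have := (G.prog_isLeast ρ v w).2 hmem
    rw [hp, top_le_iff] at this
    exact hne this
  have hkodd : ¬ Even k := by
    intro hke
    set g₀ : Fin G.d → ℕ := fun j => if (j : ℕ) ≤ k then f j else 0 with hg₀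
    refine hnotlt ((toLex g₀ : Lex (Fin G.d → ℕ)) : G.Meas) ⟨?_, ?_⟩ WithTop.coe_ne_top
    · refine Or.inr ⟨g₀, rfl, fun j => ⟨fun hj => ?_, fun hj => ?_⟩⟩
      · simp only [hg₀]; split
        · exact (hfprop j).1 hj
        · rfl
      · simp only [hg₀]; split
        · exact (hfprop j).2 hj
        · exact Nat.zero_le _
    · rw [progCond, if_pos hke, geAt, hf, trunc_coe, trunc_coe]
      refine le_of_eq ?_
      congr 1
      refine toLex_inj.2 (funext fun j => ?_)
      simp only [hg₀]
      by_cases hj : (j : ℕ) ≤ k <;> simp [hj, ← hk]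
  intro i hik
  refine ⟨fun hiodd => ?_, fun hieven => (hfprop i).1 hieven⟩
  by_contra hne
  have hlt : f i < G.nP (i : ℕ) := lt_of_le_of_ne ((hfprop i).2 hiodd) hne
  set g₁ : Fin G.d → ℕ := fun j =>
    if (j : ℕ) < (i : ℕ) then f j else if (j : ℕ) = (i : ℕ) then f i + 1 else 0 with hg₁
  refine hnotlt ((toLex g₁ : Lex (Fin G.d → ℕ)) : G.Meas) ⟨?_, ?_⟩ WithTop.coe_ne_top
  · refine Or.inr ⟨g₁, rfl, fun j => ⟨fun hj => ?_, fun hj => ?_⟩⟩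
    · simp only [hg₁]
      rcases lt_trichotomy (j : ℕ) (i : ℕ) with h | h | h
      · rw [if_pos h]; exact (hfprop j).1 hj
      · exact absurd (h ▸ hj) hiodd
      · rw [if_neg (by omega), if_neg (by omega)]
    · simp only [hg₁]
      rcases lt_trichotomy (j : ℕ) (i : ℕ) with h | h | h
      · rw [if_pos h]; exact (hfprop j).2 hj
      · rw [if_neg (by omega), if_pos h, h]; exact hlt
      · rw [if_neg (by omega), if_neg (by omega)]; exact Nat.zero_le _
  · rw [progCond, if_neg hkodd]
    left
    rw [gtAt, hf, trunc_coe, trunc_coe, WithTop.coe_lt_coe]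
    refine ⟨i, fun j hj => ?_, ?_⟩
    · have hji : (j : ℕ) < (i : ℕ) := hj
      have hjk : (j : ℕ) ≤ k := le_trans (le_of_lt hji) hik
      simp only [Pi.toLex_apply, hg₁, if_pos hjk, if_pos hji]
    · have hgi : g₁ i = f i + 1 := by simp [hg₁]
      simp only [Pi.toLex_apply, if_pos hik, if_pos (hik.trans_eq hk), hgi]
      omega

end ParityGame

end Aux

open ParityGame

/-- when `v` with priority `k` is the first vertex lifted to `⊤`, some
successor of `v` (all successors, if `v ∈ V_Even`) carries a non-`⊤` measure saturated
up to position `k`. -/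
theorem first_top_vertex_has_saturated_successor
    {V : Type*} [Fintype V] [DecidableEq V] (G : ParityGame V)
    (ρs : ℕ → V → G.Meas) (N : ℕ) (v : V)
    (hft : G.FirstTop ρs N v) (hN : 0 < N)
    (hstep : ρs N = G.Lift (ρs (N - 1)) v) :
    (G.ownerEven v = false → ∃ w, G.E v w ∧ ∃ f : Fin G.d → ℕ,
      ρs (N - 1) w = ((toLex f : Lex (Fin G.d → ℕ)) : G.Meas) ∧
      ∀ i : Fin G.d, (i : ℕ) ≤ G.prio v →
        (¬ Even (i : ℕ) → f i = G.nP (i : ℕ)) ∧ (Even (i : ℕ) → f i = 0)) ∧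
    (G.ownerEven v = true → ∀ w, G.E v w → ∃ f : Fin G.d → ℕ,
      ρs (N - 1) w = ((toLex f : Lex (Fin G.d → ℕ)) : G.Meas) ∧
      ∀ i : Fin G.d, (i : ℕ) ≤ G.prio v →
        (¬ Even (i : ℕ) → f i = G.nP (i : ℕ)) ∧ (Even (i : ℕ) → f i = 0)) := by
  obtain ⟨h0, hliftseq, hnt, htopN⟩ := hft
  have hN1 : N - 1 < N := Nat.sub_lt hN one_pos
  have hnt' : ∀ w, ρs (N - 1) w ≠ ⊤ := hnt (N - 1) hN1
  have hmeas : G.IsMeasure (ρs (N - 1)) := by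
    have key : ∀ j, j ≤ N → G.IsMeasure (ρs j) := by
      intro j
      induction j with
      | zero =>
        intro _ u
        rw [h0 u, zeroMeas]
        exact Or.inr ⟨_, rfl, fun i => ⟨fun _ => rfl, fun _ => Nat.zero_le _⟩⟩
      | succ j ih =>
        intro hj
        obtain ⟨u, hu, -, -⟩ := hliftseq j (by omega)
        rw [hu]
        exact G.inMEven_lift _ (ih (by omega)) u
    exact key _ (le_of_lt hN1)
  have htop : G.Lift (ρs (N - 1)) v v = ⊤ := by rw [← hstep]; exact htopN
  rw [Lift, Function.update_self] at htop
  have hSne : {m | ∃ w, G.E v w ∧ m = G.Prog (ρs (N - 1)) v w}.Nonempty := by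
    obtain ⟨w, hw⟩ := G.total v; exact ⟨_, w, hw, rfl⟩
  have hSfin : {m | ∃ w, G.E v w ∧ m = G.Prog (ρs (N - 1)) v w}.Finite := by
    have hsub : {m | ∃ w, G.E v w ∧ m = G.Prog (ρs (N - 1)) v w} ⊆
        (fun w => G.Prog (ρs (N - 1)) v w) '' Set.univ := by
      rintro m ⟨w, -, rfl⟩; exact ⟨w, trivial, rfl⟩
    exact (Set.finite_univ.image _).subset hsub
  have main : ∀ w, G.E v w → G.Prog (ρs (N - 1)) v w = ⊤ →
      ∃ f : Fin G.d → ℕ,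
        ρs (N - 1) w = ((toLex f : Lex (Fin G.d → ℕ)) : G.Meas) ∧
        ∀ i : Fin G.d, (i : ℕ) ≤ G.prio v →
          (¬ Even (i : ℕ) → f i = G.nP (i : ℕ)) ∧ (Even (i : ℕ) → f i = 0) := by
    intro w hw hpw
    rcases hmeas w with h | ⟨f, hf, -⟩
    · exact absurd h (hnt' w)
    · exact ⟨f, hf, G.saturated_of_prog_top _ v w (hmeas w) f hf hpw⟩
  constructor
  · intro hov
    rw [if_neg (by simp [hov])] at htop
    have hXtop : sGreatest {m | ∃ w, G.E v w ∧ m = G.Prog (ρs (N - 1)) v w} (⊤ : G.Meas) = ⊤ := by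
      rcases max_choice (ρs (N - 1) v)
        (sGreatest {m | ∃ w, G.E v w ∧ m = G.Prog (ρs (N - 1)) v w} (⊤ : G.Meas)) with h | h <;>
        rw [h] at htop
      · exact absurd htop (hnt' v)
      · exact htop
    have hgr := sGreatest_spec (dflt := (⊤ : G.Meas)) (myExistsIsGreatest hSfin hSne)
    rw [hXtop] at hgr
    obtain ⟨w, hw, hpw⟩ := hgr.1
    exact ⟨w, hw, main w hw hpw.symm⟩
  · intro hov w hw
    rw [if_pos (by simp [hov])] at htop
    have hXtop : sLeast {m | ∃ w, G.E v w ∧ m = G.Prog (ρs (N - 1)) v w} (⊤ : G.Meas) = ⊤ := by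
      rcases max_choice (ρs (N - 1) v)
        (sLeast {m | ∃ w, G.E v w ∧ m = G.Prog (ρs (N - 1)) v w} (⊤ : G.Meas)) with h | h <;>
        rw [h] at htop
      · exact absurd htop (hnt' v)
      · exact htop
    have hle := sLeast_spec (dflt := (⊤ : G.Meas)) (myExistsIsLeast hSne)
    rw [hXtop] at hle
    exact main w hw (top_le_iff.1 (hle.2 ⟨w, hw, rfl⟩))


end
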